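/- Over an even alphabet {a,b} (both a and b even), every word u in the tree T of strong bispecial f-smooth words has |u|_a = |u|_b = |u|/2; consequently all words in generation T_i have the same length l_i = L_i = c·((a+b)/2)^i − c, where c = 4a/(a+b−2). -/

import Mathlib

namespace SmoothWords

/-- Complement of a letter over the alphabet `{a, b}`. -/
def flip (a b c : ℕ) : ℕ := if c = a then b else a

/-- Run-length encoding of a finite word: list of (letter, exponent) pairs. -/
def runs : List ℕ → List (ℕ × ℕ)
  | [] => []
  | c :: t =>
    match runs t with
    | [] => [(c, 1)]
    | (d, k) :: r => if c = d then (c, k + 1) :: r else (c, 1) :: (d, k) :: r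

/-- The exponents of the canonical run-length factorization. -/
def exps (u : List ℕ) : List ℕ := (runs u).map Prod.snd

/-- Boundary cut used by the finite derivatives. -/
def cut (a b p : ℕ) : List ℕ := if p ≤ a then [] else [b]

/-- The finite derivative `D_f`. -/
def Df (a b : ℕ) (u : List ℕ) : List ℕ :=
  match exps u with
  | [] => []
  | [p] => cut a b p
  | p :: q :: rest =>
      cut a b p ++ (q :: rest).dropLast ++ cut a b ((q :: rest).getLast (List.cons_ne_nil _ _))

/-- `u` is f-derivable: letters in `{a,b}`, inner run exponents in `{a,b}`,
boundary run exponents in `[1, b]`. -/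
def Cf1 (a b : ℕ) (u : List ℕ) : Prop :=
  (∀ c ∈ u, c = a ∨ c = b) ∧
  (∀ p ∈ exps u, p ≤ b) ∧
  (∀ p ∈ ((exps u).drop 1).dropLast, p = a ∨ p = b)

/-- `u` is f-smooth: all iterated finite derivatives are f-derivable
(equivalently, some iterate is `ε`). -/
def FSmooth (a b : ℕ) (u : List ℕ) : Prop := ∀ n, Cf1 a b ((Df a b)^[n] u)

/-- The r-derivative `D_r`: keeps all exponents but cuts the last one. -/
def Dr (a b : ℕ) (u : List ℕ) : List ℕ :=
  match exps u with
  | [] => []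
  | p :: rest =>
      (p :: rest).dropLast ++ cut a b ((p :: rest).getLast (List.cons_ne_nil _ _))

/-- `u` is r-derivable. -/
def Cr1 (a b : ℕ) (u : List ℕ) : Prop :=
  (∀ c ∈ u, c = a ∨ c = b) ∧
  (∀ p ∈ exps u, p ≤ b) ∧
  (∀ p ∈ (exps u).dropLast, p = a ∨ p = b)

/-- `u` is r-smooth. -/
def RSmooth (a b : ℕ) (u : List ℕ) : Prop := ∀ n, Cr1 a b ((Dr a b)^[n] u)

/-- `y` is the derivative of the infinite word `x`: `x = x₀^{y₀} x̄₀^{y₁} x₀^{y₂} ⋯`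
with all `y i ∈ {a, b}` (in particular `x` is derivable). -/
def DerivesTo (a b : ℕ) (x y : ℕ → ℕ) : Prop :=
  (∀ i, y i = a ∨ y i = b) ∧
  ∃ S : ℕ → ℕ, S 0 = 0 ∧ (∀ k, S (k + 1) = S k + y k) ∧
    ∀ k i, S k ≤ i → i < S (k + 1) → x i = (flip a b)^[k] (x 0)

/-- An infinite word over `{a,b}` is smooth if it is infinitely derivable. -/
def Smooth (a b : ℕ) (x : ℕ → ℕ) : Prop :=
  (∀ i, x i = a ∨ x i = b) ∧
  ∃ X : ℕ → ℕ → ℕ, X 0 = x ∧ ∀ n, DerivesTo a b (X n) (X (n + 1))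

/-- Auxiliary for the f-primitives: alternate blocks with given exponents,
ending with a block of exponent `a`. -/
def pfAux (a b : ℕ) : ℕ → List ℕ → List ℕ
  | c, [] => List.replicate a c
  | c, p :: t => List.replicate p c ++ pfAux a b (flip a b c) t

/-- The f-primitive `P_{f,c}`. -/
def Pf (a b c : ℕ) (u : List ℕ) : List ℕ :=
  if c = a then List.replicate a a ++ pfAux a b b u
  else (List.replicate a a ++ pfAux a b b u).map (flip a b)

/-- `u` is a bispecial f-smooth word. -/
def Bispecial (a b : ℕ) (u : List ℕ) : Prop :=
  FSmooth a b u ∧ FSmooth a b (a :: u) ∧ FSmooth a b (b :: u) ∧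
    FSmooth a b (u ++ [a]) ∧ FSmooth a b (u ++ [b])

open Classical in
/-- The multiplicity `m(u) = |{aua,aub,bua,bub} ∩ C_f^∞| - 3`. -/
noncomputable def mult (a b : ℕ) (u : List ℕ) : ℤ :=
  (if FSmooth a b (a :: u ++ [a]) then 1 else 0) +
  (if FSmooth a b (a :: u ++ [b]) then 1 else 0) +
  (if FSmooth a b (b :: u ++ [a]) then 1 else 0) +
  (if FSmooth a b (b :: u ++ [b]) then 1 else 0) - 3

/-- The vertex of the tree `T` indexed by the path `s` from the root `ε`
(`false` = child by `P_{f,a}`, `true` = child by `P_{f,b}`). -/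
def node (a b : ℕ) : List Bool → List ℕ
  | [] => []
  | c :: s => Pf a b (if c then b else a) (node a b s)

/-- Total length `f(i) = ∑_{u ∈ T_i} |u|` of generation `i` of `T`. -/
def totalLen (a b i : ℕ) : ℕ :=
  ∑ s : Fin i → Bool, (node a b (List.ofFn s)).length

/-- Generation `i` of the tree `T`, as a finite set of words. -/
def genSet (a b i : ℕ) : Finset (List ℕ) :=
  (Finset.univ : Finset (Fin i → Bool)).image fun s => node a b (List.ofFn s)

/-- `b_i(n) = |T_i ∩ A^n|`. -/
def bfun (a b i n : ℕ) : ℕ := ((genSet a b i).filter fun u => u.length = n).card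

/-- `s_i(n) = ∑_{m<n} b_i(m)`. -/
def sfun (a b i n : ℕ) : ℕ := ∑ m ∈ Finset.range n, bfun a b i m

/-- `p_i(n) = ∑_{m<n} s_i(m)`. -/
def pfun (a b i n : ℕ) : ℕ := ∑ m ∈ Finset.range n, sfun a b i m

/-- `p(n) = ∑_i p_i(n)`. -/
noncomputable def pTot (a b n : ℕ) : ℝ := ∑' i : ℕ, (pfun a b i n : ℝ)

/-- `l_i`, the minimal length of a word of generation `i` of `T`. -/
noncomputable def li (a b i : ℕ) : ℕ :=
  sInf {m | ∃ s : Fin i → Bool, (node a b (List.ofFn s)).length = m}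

/-- `u` is a factor of the infinite word `x`. -/
def FactorOf (u : List ℕ) (x : ℕ → ℕ) : Prop :=
  ∃ i, u = (List.range u.length).map fun j => x (i + j)


/-- Signed alternating sum of a word's letters. -/
def salt : List ℕ → ℤ
  | [] => 0
  | x :: t => (x : ℤ) - salt t

lemma salt_cons (x : ℕ) (t : List ℕ) : salt (x :: t) = (x : ℤ) - salt t := rfl

lemma salt_append (l₁ l₂ : List ℕ) :
    salt (l₁ ++ l₂) = salt l₁ + (-1) ^ l₁.length * salt l₂ := by
  induction l₁ with
  | nil => simp [salt]
  | cons x t ih =>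
    rw [List.cons_append, salt_cons, ih, salt_cons, List.length_cons, pow_succ]
    ring

lemma salt_replicate_even {n : ℕ} (hn : Even n) (c : ℕ) :
    salt (List.replicate n c) = 0 := by
  obtain ⟨k, rfl⟩ := hn
  induction k with
  | zero => simp [salt]
  | succ m ih =>
    have h : m + 1 + (m + 1) = (m + m) + 1 + 1 := by ring
    rw [h, List.replicate_succ, List.replicate_succ]
    simp [salt, ih]

section

variable {a b : ℕ}

lemma flip_a (hab : a < b) : flip a b a = b := by simp [flip]

lemma flip_b (hab : a < b) : flip a b b = a := by simp [flip, hab.ne']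

lemma flip_mem (hab : a < b) {c : ℕ} (hc : c = a ∨ c = b) :
    flip a b c = a ∨ flip a b c = b := by
  rcases hc with rfl | rfl
  · exact Or.inr (flip_a hab)
  · exact Or.inl (flip_b hab)

lemma flip_add (hab : a < b) {c : ℕ} (hc : c = a ∨ c = b) :
    flip a b c + c = a + b := by
  rcases hc with rfl | rfl
  · rw [flip_a hab]; ring
  · rw [flip_b hab]

lemma count_add_count {l : List ℕ} (hab : a < b) (hl : ∀ x ∈ l, x = a ∨ x = b) :
    l.count a + l.count b = l.length := by
  induction l with
  | nil => simp
  | cons x t ih =>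
    have hx := hl x (by simp)
    have ht := ih fun y hy => hl y (by simp [hy])
    rcases hx with rfl | rfl
    · simp [List.count_cons, hab.ne, hab.ne']
      omega
    · simp [List.count_cons, hab.ne, hab.ne']
      omega

lemma sum_eq_counts (hab : a < b) {l : List ℕ} (hl : ∀ x ∈ l, x = a ∨ x = b) :
    l.sum = a * l.count a + b * l.count b := by
  induction l with
  | nil => simp
  | cons x t ih =>
    have hx := hl x (by simp)
    have ht := ih fun y hy => hl y (by simp [hy])
    rcases hx with h | h
    · rw [List.sum_cons, ht, h, List.count_cons_self, List.count_cons_of_ne hab.ne]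
      ring
    · rw [List.sum_cons, ht, h, List.count_cons_of_ne hab.ne', List.count_cons_self]
      ring

lemma pfAux_spec (hab : a < b) (hae : Even a) (hbe : Even b) :
    ∀ (u : List ℕ) (c : ℕ), (c = a ∨ c = b) → (∀ x ∈ u, x = a ∨ x = b) →
      (∀ x ∈ pfAux a b c u, x = a ∨ x = b) ∧
      (pfAux a b c u).length = u.sum + a ∧
      Even (pfAux a b c u).length ∧
      salt (pfAux a b c u) = 0 ∧
      ((pfAux a b c u).count a : ℤ) - ((pfAux a b c u).count b : ℤ)
        = (if c = a then (1 : ℤ) else -1) * (salt u + (-1) ^ u.length * (a : ℤ)) := by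
  intro u
  induction u with
  | nil =>
    intro c hc _
    refine ⟨?_, ?_, ?_, ?_, ?_⟩
    · intro x hx
      rw [pfAux] at hx
      rcases List.eq_of_mem_replicate hx with rfl
      exact hc
    · simp [pfAux]
    · rw [pfAux]; simpa using hae
    · rw [pfAux]; exact salt_replicate_even hae c
    · rw [pfAux]
      rcases hc with rfl | rfl
      · simp [List.count_replicate, hab.ne, hab.ne', salt]
      · simp [List.count_replicate, hab.ne, hab.ne', salt]
  | cons p t ih =>
    intro c hc hu
    have hp : p = a ∨ p = b := hu p (by simp)
    have hpe : Even p := by rcases hp with rfl | rfl <;> assumption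
    have ht : ∀ x ∈ t, x = a ∨ x = b := fun y hy => hu y (by simp [hy])
    obtain ⟨h1, h2, h3, h4, h5⟩ := ih (flip a b c) (flip_mem hab hc) ht
    refine ⟨?_, ?_, ?_, ?_, ?_⟩
    · intro x hx
      rw [pfAux, List.mem_append] at hx
      rcases hx with hx | hx
      · rcases List.eq_of_mem_replicate hx with rfl; exact hc
      · exact h1 x hx
    · rw [pfAux]
      simp [h2]
      omega
    · rw [pfAux]
      simp only [List.length_append, List.length_replicate]
      exact hpe.add h3
    · rw [pfAux, salt_append, salt_replicate_even hpe, h4]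
      simp
    · have hsign : (if flip a b c = a then (1 : ℤ) else -1)
          = -(if c = a then (1 : ℤ) else -1) := by
        rcases hc with rfl | rfl
        · rw [flip_a hab, if_neg hab.ne', if_pos rfl]
        · rw [flip_b hab, if_pos rfl, if_neg hab.ne']
          norm_num
      have hrep : ((List.replicate p c).count a : ℤ) - ((List.replicate p c).count b : ℤ)
          = (if c = a then (1 : ℤ) else -1) * p := by
        rcases hc with rfl | rfl
        · simp [List.count_replicate, hab.ne, hab.ne']
        · simp [List.count_replicate, hab.ne, hab.ne']
      have e5 : ((pfAux a b (flip a b c) t).count a : ℤ)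
            - ((pfAux a b (flip a b c) t).count b : ℤ)
          = -(if c = a then (1 : ℤ) else -1) * (salt t + (-1) ^ t.length * (a : ℤ)) := by
        rw [h5, hsign]
      rw [pfAux, List.count_append, List.count_append, salt_cons, List.length_cons, pow_succ]
      push_cast
      linarith [hrep, e5]

lemma count_map_flip (hab : a < b) {l : List ℕ} (hl : ∀ x ∈ l, x = a ∨ x = b) :
    (l.map (flip a b)).count a = l.count b ∧ (l.map (flip a b)).count b = l.count a := by
  induction l with
  | nil => simp
  | cons x t ih =>
    obtain ⟨i1, i2⟩ := ih fun y hy => hl y (by simp [hy])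
    rcases hl x (by simp) with rfl | rfl
    · rw [List.map_cons, flip_a hab]
      simp [List.count_cons, hab.ne, hab.ne', i1, i2]
    · rw [List.map_cons, flip_b hab]
      simp [List.count_cons, hab.ne, hab.ne', i1, i2]

lemma salt_map_flip (hab : a < b) {l : List ℕ} (hl : ∀ x ∈ l, x = a ∨ x = b) :
    salt (l.map (flip a b)) + salt l = salt (List.replicate l.length (a + b)) := by
  induction l with
  | nil => simp [salt]
  | cons x t ih =>
    have it := ih fun y hy => hl y (by simp [hy])
    have hx : (flip a b x : ℤ) + (x : ℤ) = (a : ℤ) + b := by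
      exact_mod_cast congrArg (Nat.cast : ℕ → ℤ) (flip_add hab (hl x (by simp)))
    rw [List.map_cons, List.length_cons, List.replicate_succ]
    simp only [salt] at *
    push_cast
    push_cast at hx it ⊢
    linarith

lemma node_spec (hab : a < b) (hae : Even a) (hbe : Even b) :
    ∀ s : List Bool,
      (∀ x ∈ node a b s, x = a ∨ x = b) ∧ Even (node a b s).length ∧
      salt (node a b s) = 0 ∧ (node a b s).count a = (node a b s).count b := by
  intro s
  induction s with
  | nil => simp [node, salt]
  | cons c s ih =>
    obtain ⟨i1, i2, i3, i4⟩ := ih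
    set u := node a b s with hu
    obtain ⟨p1, p2, p3, p4, p5⟩ := pfAux_spec hab hae hbe u b (Or.inr rfl) i1
    set w := List.replicate a a ++ pfAux a b b u with hw
    have w1 : ∀ x ∈ w, x = a ∨ x = b := by
      intro x hx
      rw [hw, List.mem_append] at hx
      rcases hx with hx | hx
      · exact Or.inl (List.eq_of_mem_replicate hx)
      · exact p1 x hx
    have w2 : Even w.length := by
      rw [hw]; simp only [List.length_append, List.length_replicate]
      exact hae.add p3
    have w3 : salt w = 0 := by
      rw [hw, salt_append, salt_replicate_even hae, p4]; simp
    have w4 : w.count a = w.count b := by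
      have hca : w.count a = a + (pfAux a b b u).count a := by
        rw [hw, List.count_append, List.count_replicate_self]
      have hcb : w.count b = (pfAux a b b u).count b := by
        rw [hw, List.count_append, List.count_replicate]
        simp [hab.ne]
      have hpow : ((-1 : ℤ)) ^ u.length = 1 := i2.neg_one_pow
      have hdiff : ((pfAux a b b u).count a : ℤ) - ((pfAux a b b u).count b : ℤ)
          = -(a : ℤ) := by
        rw [p5, if_neg hab.ne', i3, hpow]; ring
      omega
    rcases c with _ | _
    · have hnode : node a b (false :: s) = w := by
        simp [node, Pf, hw, ← hu]
      rw [hnode]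
      exact ⟨w1, w2, w3, w4⟩
    · have hnode : node a b (true :: s) = w.map (flip a b) := by
        simp [node, Pf, hab.ne', hw, ← hu]
      rw [hnode]
      refine ⟨?_, ?_, ?_, ?_⟩
      · intro x hx
        rw [List.mem_map] at hx
        obtain ⟨y, hy, rfl⟩ := hx
        exact flip_mem hab (w1 y hy)
      · rw [List.length_map]; exact w2
      · have h := salt_map_flip hab w1
        rw [w3, add_zero] at h
        rw [h]
        exact salt_replicate_even w2 _
      · obtain ⟨c1, c2⟩ := count_map_flip hab w1
        rw [c1, c2, w4]

lemma node_len_succ (hab : a < b) (hae : Even a) (hbe : Even b) (c : Bool) (s : List Bool) :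
    (node a b (c :: s)).length = (node a b s).sum + 2 * a := by
  obtain ⟨i1, _, _, _⟩ := node_spec hab hae hbe s
  obtain ⟨_, p2, _, _, _⟩ := pfAux_spec hab hae hbe (node a b s) b (Or.inr rfl) i1
  rcases c with _ | _ <;>
    simp [node, Pf, hab.ne', p2] <;> omega

end

theorem stmt16 (a b : ℕ) (ha : 1 ≤ a) (hab : a < b) (hae : Even a) (hbe : Even b) :
    (∀ s : List Bool, (node a b s).count a = (node a b s).count b ∧
        (node a b s).count a = (node a b s).length / 2) ∧
    (∀ i : ℕ, ∀ s : List Bool, s.length = i →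
      ((node a b s).length : ℝ) =
        (4 * a / ((a : ℝ) + b - 2)) * (((a : ℝ) + b) / 2) ^ i
          - 4 * a / ((a : ℝ) + b - 2)) := by
  have ha2 : 2 ≤ a := by
    rcases hae with ⟨k, hk⟩; omega
  have hden : ((a : ℝ) + b - 2) ≠ 0 := by
    have : (5 : ℝ) ≤ (a : ℝ) + b := by
      have : (2 : ℝ) ≤ (a : ℝ) := by exact_mod_cast ha2
      have hb : (3 : ℝ) ≤ (b : ℝ) := by
        have : 3 ≤ b := by omega
        exact_mod_cast this
      linarith
    linarith
  constructor
  · intro s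
    obtain ⟨i1, i2, i3, i4⟩ := node_spec hab hae hbe s
    have hsum := count_add_count hab i1
    refine ⟨i4, ?_⟩
    omega
  · have key : ∀ s : List Bool, ((node a b s).length : ℝ) =
        (4 * a / ((a : ℝ) + b - 2)) * (((a : ℝ) + b) / 2) ^ s.length
          - 4 * a / ((a : ℝ) + b - 2) := by
      intro s
      induction s with
      | nil => simp [node]
      | cons c s ih =>
        obtain ⟨i1, i2, i3, i4⟩ := node_spec hab hae hbe s
        have hsum := count_add_count hab i1
        have hlen := node_len_succ hab hae hbe c s
        have hsumc := sum_eq_counts hab i1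
        set u := node a b s with hu
        have hcount : (u.count a : ℝ) = (u.length : ℝ) / 2 := by
          have : u.length = 2 * u.count a := by omega
          rw [this]; push_cast; ring
        have hsumR : ((u.sum : ℝ)) = ((a : ℝ) + b) * ((u.length : ℝ) / 2) := by
          rw [hsumc]
          push_cast
          rw [← i4, hcount]
          ring
        have : ((node a b (c :: s)).length : ℝ) = (u.sum : ℝ) + 2 * a := by
          rw [hlen]; push_cast; ring
        rw [this, hsumR, ih, List.length_cons]
        field_simp
        ring
    intro i s hs
    rw [← hs]
    exact key s

end SmoothWords
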